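/- Let A ∈ ℝmax^{p×n}, B ∈ 𝔾^{p×n}, c ∈ ℝmax^p, d ∈ 𝔾^p, let e be an n-dimensional row vector over ℝmax, f an n-dimensional row vector over 𝔾, g ∈ ℝmax, h ∈ 𝔾 with h ≠ +∞, and suppose e and g are not all equal to -∞. Let Q be the tropical polyhedron with mixed constraints defined by the system A x ⊕ c ≤𝔾 B x ⊕ d together with: for each i ∈ [n], the inequality fᵢxᵢ ≤𝔾 (0̲ ⊗ e)x ⊕ 0̲ ⊗ g if fᵢ ∈ ℝmax, the inequality |fᵢ|xᵢ ≤𝔾 e x ⊕ g if fᵢ ∈ ℝ⁻, and the inequality xᵢ ≤𝔾 -∞ if fᵢ = +∞; the inequality h ≤𝔾 (0̲ ⊗ e)x ⊕ 0̲ ⊗ g if h ∈ ℝmax and the inequality |h| ≤𝔾 e x ⊕ g if h ∈ ℝ⁻; and, if g = -∞, the inequality 0 ≤𝔾 ⊕_{i : eᵢ ≠ -∞} (+∞)xᵢ. Then the implication 'every x ∈ ℝmaxⁿ with A x ⊕ c ≤𝔾 B x ⊕ d satisfies e x ⊕ g ≤𝔾 f x ⊕ h' holds if, and only if, Q is empty.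 -/

import Mathlib

attribute [local instance] Classical.propDecidable

/-- The germ semiring `𝔾 = ℝmax ∪ {+∞} ∪ ℝ⁻`: `negInf` is `-∞`, `fin a` is the
real number `a` (an element of `ℝmax`), `germ a` is the germ `a̲ ∈ ℝ⁻`, and
`posInf` is `+∞`. -/
inductive TGerm where
  | negInf : TGerm
  | fin : ℝ → TGerm
  | germ : ℝ → TGerm
  | posInf : TGerm

namespace TGerm

/-- The modulus `|x| ∈ ℝmax ∪ {+∞} = EReal` of an element of `𝔾`. -/
noncomputable def modulus : TGerm → EReal
  | negInf => ⊥
  | fin a => (a : EReal)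
  | germ a => (a : EReal)
  | posInf => ⊤

/-- Whether `x` belongs to the copy `ℝ⁻` of perturbed reals. -/
def isPert : TGerm → Bool
  | germ _ => true
  | _ => false

/-- The total order `≤𝔾` on `𝔾`: `x ≤𝔾 y` iff `|x| < |y|` when
`x ∈ ℝmax ∪ {+∞}` and `y ∈ ℝ⁻`, and `|x| ≤ |y|` otherwise. -/
def gle (x y : TGerm) : Prop :=
  if isPert x = false ∧ isPert y = true then modulus x < modulus y
  else modulus x ≤ modulus y

/-- The valuation `x(ε) ∈ ℝmax ∪ {+∞} = EReal` of `x ∈ 𝔾` at `ε`. -/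
noncomputable def val : TGerm → ℝ → EReal
  | negInf, _ => ⊥
  | fin a, _ => (a : EReal)
  | germ a, ε => ((a - ε : ℝ) : EReal)
  | posInf, _ => ⊤

/-- The addition `⊕` of `𝔾`: the maximum with respect to `≤𝔾`. -/
noncomputable def add (x y : TGerm) : TGerm := if gle x y then y else x

/-- The minimum with respect to `≤𝔾`. -/
noncomputable def gmin (x y : TGerm) : TGerm := if gle x y then x else y

/-- The tropical sum `⊕ᵢ f i` of a finite family in `𝔾`. -/
noncomputable def gsum {n : ℕ} (f : Fin n → TGerm) : TGerm :=
  (List.ofFn f).foldr add negInf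

/-- The minimum (w.r.t. `≤𝔾`) of a finite family in `𝔾`. -/
noncomputable def ginf {n : ℕ} (f : Fin n → TGerm) : TGerm :=
  (List.ofFn f).foldr gmin posInf

/-- The multiplication `⊗` of `𝔾`. -/
def mul : TGerm → TGerm → TGerm
  | negInf, _ => negInf
  | _, negInf => negInf
  | posInf, _ => posInf
  | _, posInf => posInf
  | fin a, fin b => fin (a + b)
  | fin a, germ b => germ (a + b)
  | germ a, fin b => germ (a + b)
  | germ a, germ b => germ (a + b)

end TGerm

/-- The embedding of `ℝmax = ℝ ∪ {-∞}` into the germ semiring `𝔾`. -/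
def toGerm (x : WithBot ℝ) : TGerm := WithBot.recBotCoe TGerm.negInf TGerm.fin x

/-- The embedding of `ℝmax = ℝ ∪ {-∞}` into `ℝmax ∪ {+∞} = EReal`. -/
noncomputable def rmaxToEReal (x : WithBot ℝ) : EReal :=
  WithBot.recBotCoe ⊥ (fun a : ℝ => (a : EReal)) x

/-- The germ `e x ⊕ g`, where `e` is a row vector over `ℝmax` and `g ∈ ℝmax`. -/
noncomputable def exG {n : ℕ} (e : Fin n → WithBot ℝ) (g : WithBot ℝ)
    (x : Fin n → WithBot ℝ) : TGerm :=
  TGerm.add (TGerm.gsum fun j => (toGerm (e j)).mul (toGerm (x j))) (toGerm g)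

/-- The germ `(0̲ ⊗ e) x ⊕ 0̲ ⊗ g`. -/
noncomputable def exG0 {n : ℕ} (e : Fin n → WithBot ℝ) (g : WithBot ℝ)
    (x : Fin n → WithBot ℝ) : TGerm :=
  TGerm.add (TGerm.gsum fun j => ((TGerm.germ 0).mul (toGerm (e j))).mul (toGerm (x j)))
    ((TGerm.germ 0).mul (toGerm g))

/-- The constraint associated with the coefficient `fᵢ`:
`fᵢxᵢ ≤𝔾 (0̲ ⊗ e)x ⊕ 0̲ ⊗ g` if `fᵢ ∈ ℝmax`, `|fᵢ|xᵢ ≤𝔾 e x ⊕ g` if `fᵢ ∈ ℝ⁻`, and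
`xᵢ ≤𝔾 -∞` if `fᵢ = +∞`. -/
noncomputable def fCon {n : ℕ} (e : Fin n → WithBot ℝ) (g : WithBot ℝ)
    (f : Fin n → TGerm) (x : Fin n → WithBot ℝ) (i : Fin n) : Prop :=
  match f i with
  | TGerm.posInf => (toGerm (x i)).gle TGerm.negInf
  | TGerm.germ r => ((TGerm.fin r).mul (toGerm (x i))).gle (exG e g x)
  | fv => (fv.mul (toGerm (x i))).gle (exG0 e g x)

/-- The constraint associated with `h`: `h ≤𝔾 (0̲ ⊗ e)x ⊕ 0̲ ⊗ g` if `h ∈ ℝmax` and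
`|h| ≤𝔾 e x ⊕ g` if `h ∈ ℝ⁻` (the case `h = +∞` is excluded by hypothesis). -/
noncomputable def hCon {n : ℕ} (e : Fin n → WithBot ℝ) (g : WithBot ℝ) (h : TGerm)
    (x : Fin n → WithBot ℝ) : Prop :=
  match h with
  | TGerm.germ r => (TGerm.fin r).gle (exG e g x)
  | TGerm.posInf => True
  | hv => hv.gle (exG0 e g x)

/-- The constraint `0 ≤𝔾 ⊕_{i : eᵢ ≠ -∞} (+∞)xᵢ`, imposed when `g = -∞`. -/
noncomputable def gCon {n : ℕ} (e : Fin n → WithBot ℝ) (g : WithBot ℝ)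
    (x : Fin n → WithBot ℝ) : Prop :=
  g = ⊥ → (TGerm.fin 0).gle
    (TGerm.gsum fun i =>
      if e i = ⊥ then TGerm.negInf else TGerm.posInf.mul (toGerm (x i)))


section Aux

open TGerm

lemma negInf_gle (t : TGerm) : TGerm.negInf.gle t := by
  cases t <;> simp [TGerm.gle, TGerm.isPert, TGerm.modulus]

lemma fin_gle_negInf (a : ℝ) : (TGerm.fin a).gle TGerm.negInf ↔ False := by
  simp [TGerm.gle, TGerm.isPert, TGerm.modulus]

lemma gle_refl (x : TGerm) : x.gle x := by
  cases x <;> simp [TGerm.gle, TGerm.isPert, TGerm.modulus]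

lemma gle_trans {x y z : TGerm} (h1 : x.gle y) (h2 : y.gle z) : x.gle z := by
  cases x <;> cases y <;> cases z <;>
    simp_all [TGerm.gle, TGerm.isPert, TGerm.modulus] <;>
    first
      | exact h1.trans h2
      | exact h1.trans_lt h2
      | exact h1.trans_le h2
      | exact lt_trans h1 h2
      | exact le_of_lt (h1.trans_lt h2)
      | exact le_of_lt (h1.trans_le h2)
      | exact le_of_lt (lt_trans h1 h2)
      | exact le_trans h1 h2

lemma gle_total (x y : TGerm) : x.gle y ∨ y.gle x := by
  cases x <;> cases y <;>
    simp [TGerm.gle, TGerm.isPert, TGerm.modulus] <;>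
    first
      | exact le_total _ _
      | exact lt_or_ge (_ : ℝ) _
      | exact le_or_gt (_ : ℝ) _

lemma gle_add_left {u v : TGerm} : u.gle (u.add v) := by
  unfold TGerm.add; split
  · assumption
  · exact gle_refl u

lemma gle_add_right {u v : TGerm} : v.gle (u.add v) := by
  unfold TGerm.add; split
  · exact gle_refl v
  · exact (gle_total u v).resolve_left (by assumption)

lemma not_gle_add {L u v : TGerm} :
    ¬ L.gle (u.add v) ↔ ¬ L.gle u ∧ ¬ L.gle v := by
  constructor
  · intro hL
    exact ⟨fun hu => hL (gle_trans hu gle_add_left),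
           fun hv => hL (gle_trans hv gle_add_right)⟩
  · rintro ⟨hu, hv⟩ hL
    unfold TGerm.add at hL; split at hL
    · exact hv hL
    · exact hu hL

lemma not_gle_foldr {L : TGerm} {l : List TGerm} :
    ¬ L.gle (l.foldr TGerm.add TGerm.negInf)
      ↔ ¬ L.gle TGerm.negInf ∧ ∀ t ∈ l, ¬ L.gle t := by
  induction l with
  | nil => simp
  | cons a l ih =>
    simp only [List.foldr, not_gle_add, ih, List.mem_cons]
    constructor
    · rintro ⟨ha, hn, hl⟩
      exact ⟨hn, fun t ht => ht.elim (fun h' => h' ▸ ha) (hl t)⟩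
    · rintro ⟨hn, hl⟩
      exact ⟨hl a (Or.inl rfl), hn, fun t ht => hl t (Or.inr ht)⟩

lemma not_gle_gsum {n : ℕ} {L : TGerm} {f : Fin n → TGerm} :
    ¬ L.gle (TGerm.gsum f) ↔ ¬ L.gle TGerm.negInf ∧ ∀ j, ¬ L.gle (f j) := by
  unfold TGerm.gsum
  rw [not_gle_foldr]
  simp [List.mem_ofFn]

lemma gle_foldr {t : TGerm} {l : List TGerm} (h : t ∈ l) :
    t.gle (l.foldr TGerm.add TGerm.negInf) := by
  induction l with
  | nil => simp at h
  | cons a l ih =>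
    rcases List.mem_cons.mp h with rfl | h'
    · exact gle_add_left
    · exact gle_trans (ih h') gle_add_right

lemma gle_gsum {n : ℕ} (f : Fin n → TGerm) (j : Fin n) :
    (f j).gle (TGerm.gsum f) :=
  gle_foldr (by simp [List.mem_ofFn])

/-- Membership in the copy of `ℝmax` inside `𝔾`. -/
def isR (t : TGerm) : Prop := t = TGerm.negInf ∨ ∃ a, t = TGerm.fin a

lemma negInf_mul (y : TGerm) : TGerm.negInf.mul y = TGerm.negInf := by
  cases y <;> rfl

lemma mul_negInf (u : TGerm) : u.mul TGerm.negInf = TGerm.negInf := by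
  cases u <;> rfl

lemma isR_toGerm (w : WithBot ℝ) : isR (toGerm w) := by
  cases w with
  | bot => exact Or.inl rfl
  | coe a => exact Or.inr ⟨a, rfl⟩

lemma isR_mul {u v : TGerm} (hu : isR u) (hv : isR v) : isR (u.mul v) := by
  rcases hu with rfl | ⟨a, rfl⟩ <;> rcases hv with rfl | ⟨b, rfl⟩
  · exact Or.inl rfl
  · exact Or.inl rfl
  · exact Or.inl rfl
  · exact Or.inr ⟨a + b, rfl⟩

lemma isR_add {u v : TGerm} (hu : isR u) (hv : isR v) : isR (u.add v) := by
  unfold TGerm.add; split <;> assumption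

lemma isR_foldr {l : List TGerm} (h : ∀ t ∈ l, isR t) :
    isR (l.foldr TGerm.add TGerm.negInf) := by
  induction l with
  | nil => exact Or.inl rfl
  | cons a l ih =>
    exact isR_add (h a (by simp)) (ih fun t ht => h t (by simp [ht]))

lemma isR_gsum {n : ℕ} {f : Fin n → TGerm} (h : ∀ j, isR (f j)) :
    isR (TGerm.gsum f) := by
  apply isR_foldr
  intro t ht
  rw [List.mem_ofFn] at ht
  obtain ⟨j, rfl⟩ := ht
  exact h j

lemma isR_exG {n : ℕ} (e : Fin n → WithBot ℝ) (g : WithBot ℝ)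
    (x : Fin n → WithBot ℝ) : isR (exG e g x) :=
  isR_add (isR_gsum fun j => isR_mul (isR_toGerm _) (isR_toGerm _)) (isR_toGerm g)

lemma isR_gle_negInf {t : TGerm} (ht : isR t) (h : t.gle TGerm.negInf) :
    t = TGerm.negInf := by
  rcases ht with rfl | ⟨a, rfl⟩
  · rfl
  · exact absurd h (by simp [fin_gle_negInf])

lemma foldr_negInf {l : List TGerm} (h : ∀ t ∈ l, t = TGerm.negInf) :
    l.foldr TGerm.add TGerm.negInf = TGerm.negInf := by
  induction l with
  | nil => rfl
  | cons a l ih =>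
    simp only [List.foldr]
    rw [h a (by simp), ih fun t ht => h t (by simp [ht])]
    simp [TGerm.add]

lemma gsum_negInf {n : ℕ} {f : Fin n → TGerm} (h : ∀ j, f j = TGerm.negInf) :
    TGerm.gsum f = TGerm.negInf := by
  apply foldr_negInf
  intro t ht
  rw [List.mem_ofFn] at ht
  obtain ⟨j, rfl⟩ := ht
  exact h j

lemma add_negInf_right (u : TGerm) : u.add TGerm.negInf = u := by
  cases u <;> simp [TGerm.add, TGerm.gle, TGerm.isPert, TGerm.modulus]

lemma mul_germ0_add {u v : TGerm} (hu : isR u) (hv : isR v) :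
    (TGerm.germ 0).mul (u.add v)
      = ((TGerm.germ 0).mul u).add ((TGerm.germ 0).mul v) := by
  rcases hu with rfl | ⟨a, rfl⟩ <;> rcases hv with rfl | ⟨b, rfl⟩
  · simp [TGerm.add]
  · simp [TGerm.add, negInf_gle, TGerm.mul]
  · simp only [TGerm.mul]
    rw [add_negInf_right, add_negInf_right]
  · have h1 : (TGerm.fin a).gle (TGerm.fin b)
        ↔ (TGerm.germ (0 + a)).gle (TGerm.germ (0 + b)) := by
      simp [TGerm.gle, TGerm.isPert, TGerm.modulus]
    simp only [TGerm.add, TGerm.mul]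
    by_cases hab : (TGerm.fin a).gle (TGerm.fin b)
    · rw [if_pos hab]; exact (if_pos (h1.mp hab)).symm
    · rw [if_neg hab]; exact (if_neg (fun hq => hab (h1.mpr hq))).symm

lemma germ0_foldr {l : List TGerm} (hl : ∀ t ∈ l, isR t) :
    (TGerm.germ 0).mul (l.foldr TGerm.add TGerm.negInf)
      = (l.map ((TGerm.germ 0).mul ·)).foldr TGerm.add TGerm.negInf := by
  induction l with
  | nil => rfl
  | cons a l ih =>
    simp only [List.foldr, List.map]
    rw [mul_germ0_add (hl a (by simp)) (isR_foldr fun t ht => hl t (by simp [ht])),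
      ih fun t ht => hl t (by simp [ht])]

lemma germ0_gsum {n : ℕ} {t : Fin n → TGerm} (ht : ∀ j, isR (t j)) :
    (TGerm.germ 0).mul (TGerm.gsum t)
      = TGerm.gsum (fun j => (TGerm.germ 0).mul (t j)) := by
  unfold TGerm.gsum
  rw [germ0_foldr (by
      intro u hu
      rw [List.mem_ofFn] at hu
      obtain ⟨j, rfl⟩ := hu
      exact ht j),
    List.map_ofFn]
  rfl

lemma germ0_mul_assoc (u v : WithBot ℝ) :
    ((TGerm.germ 0).mul (toGerm u)).mul (toGerm v)
      = (TGerm.germ 0).mul ((toGerm u).mul (toGerm v)) := by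
  cases u <;> cases v <;> simp [toGerm, TGerm.mul, add_assoc]

lemma exG0_eq {n : ℕ} (e : Fin n → WithBot ℝ) (g : WithBot ℝ)
    (x : Fin n → WithBot ℝ) :
    exG0 e g x = (TGerm.germ 0).mul (exG e g x) := by
  unfold exG0 exG
  rw [mul_germ0_add (isR_gsum fun j => isR_mul (isR_toGerm _) (isR_toGerm _))
      (isR_toGerm g),
    germ0_gsum (fun j => isR_mul (isR_toGerm _) (isR_toGerm _))]
  simp only [germ0_mul_assoc]

lemma key {n : ℕ} (e : Fin n → WithBot ℝ) (f : Fin n → TGerm) (g : WithBot ℝ)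
    (h : TGerm) (hh : h ≠ TGerm.posInf) (x : Fin n → WithBot ℝ) :
    ¬ (exG e g x).gle (TGerm.add (TGerm.gsum fun j => (f j).mul (toGerm (x j))) h)
      ↔ (∀ i, fCon e g f x i) ∧ hCon e g h x ∧ gCon e g x := by
  rcases isR_exG e g x with hE | ⟨a, hE⟩
  · constructor
    · intro hL
      exact absurd (hE ▸ negInf_gle _) hL
    · rintro ⟨-, -, hg⟩ -
      unfold exG at hE
      have hT : (TGerm.gsum fun j => (toGerm (e j)).mul (toGerm (x j)))
          = TGerm.negInf :=
        isR_gle_negInf (isR_gsum fun j => isR_mul (isR_toGerm _) (isR_toGerm _))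
          (hE ▸ gle_add_left)
      have hg' : toGerm g = TGerm.negInf :=
        isR_gle_negInf (isR_toGerm g) (hE ▸ gle_add_right)
      have hgbot : g = ⊥ := by
        cases g with
        | bot => rfl
        | coe b => simp [toGerm] at hg'
      have hterm : ∀ j, (toGerm (e j)).mul (toGerm (x j)) = TGerm.negInf := by
        intro j
        have h2 := gle_gsum (fun j => (toGerm (e j)).mul (toGerm (x j))) j
        rw [hT] at h2
        exact isR_gle_negInf (isR_mul (isR_toGerm _) (isR_toGerm _)) h2
      have hS : (TGerm.gsum fun i =>
          if e i = ⊥ then TGerm.negInf else TGerm.posInf.mul (toGerm (x i)))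
          = TGerm.negInf := by
        apply gsum_negInf
        intro i
        by_cases hei : e i = ⊥
        · rw [if_pos hei]
        · rw [if_neg hei]
          cases hxi : x i with
          | bot => rfl
          | coe b =>
            exfalso
            have := hterm i
            cases he : e i with
            | bot => exact hei he
            | coe c => rw [he, hxi] at this; simp [toGerm, TGerm.mul] at this
      have := hg hgbot
      rw [hS] at this
      exact (fin_gle_negInf 0).mp this
  · have h0 : exG0 e g x = TGerm.germ (0 + a) := by
      rw [exG0_eq, hE]; rfl
    have hg : gCon e g x := by
      intro hgbot
      unfold exG at hE
      rw [hgbot] at hE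
      rw [show toGerm (⊥ : WithBot ℝ) = TGerm.negInf from rfl,
        add_negInf_right] at hE
      have hex : ∃ j, (toGerm (e j)).mul (toGerm (x j)) ≠ TGerm.negInf := by
        by_contra hall
        push_neg at hall
        rw [gsum_negInf hall] at hE
        simp at hE
      obtain ⟨j, hj⟩ := hex
      cases he : e j with
      | bot =>
        exact absurd (by
          rw [he, show toGerm (⊥ : WithBot ℝ) = TGerm.negInf from rfl,
            negInf_mul]) hj
      | coe c =>
        cases hx : x j with
        | bot =>
          exact absurd (by
            rw [hx, show toGerm (⊥ : WithBot ℝ) = TGerm.negInf from rfl,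
              mul_negInf]) hj
        | coe b =>
          have hne' : ¬ e j = ⊥ := by rw [he]; simp
          have h1 : (TGerm.fin 0).gle
              ((fun i => if e i = ⊥ then TGerm.negInf
                else TGerm.posInf.mul (toGerm (x i))) j) := by
            simp only [if_neg hne', hx]
            simp [toGerm, TGerm.mul, TGerm.gle, TGerm.isPert, TGerm.modulus]
          exact gle_trans h1 (gle_gsum (fun i => if e i = ⊥ then TGerm.negInf
            else TGerm.posInf.mul (toGerm (x i))) j)
    have hfCon : ∀ j, (¬ (TGerm.fin a).gle ((f j).mul (toGerm (x j)))
        ↔ fCon e g f x j) := by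
      intro j
      unfold fCon
      cases hf : f j <;> cases hx : x j <;>
        simp [hE, h0, toGerm, TGerm.mul, TGerm.gle, TGerm.isPert, TGerm.modulus,
          fin_gle_negInf, not_le, not_lt, exG0_eq]
    have hhCon : ¬ (TGerm.fin a).gle h ↔ hCon e g h x := by
      unfold hCon
      cases h with
      | posInf => exact absurd rfl hh
      | negInf =>
        simp [hE, h0, TGerm.gle, TGerm.isPert, TGerm.modulus]
      | fin r =>
        simp [hE, h0, TGerm.gle, TGerm.isPert, TGerm.modulus, not_le]
      | germ r =>
        simp [hE, h0, TGerm.gle, TGerm.isPert, TGerm.modulus, not_lt]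
    rw [hE, not_gle_add, not_gle_gsum]
    constructor
    · rintro ⟨⟨-, hj⟩, hh'⟩
      exact ⟨fun j => (hfCon j).mp (hj j), hhCon.mp hh', hg⟩
    · rintro ⟨hj, hh', -⟩
      exact ⟨⟨by simp [fin_gle_negInf], fun j => (hfCon j).mpr (hj j)⟩,
        hhCon.mpr hh'⟩

end Aux

theorem statement_15 (n p : ℕ)
    (A : Fin p → Fin n → WithBot ℝ) (B : Fin p → Fin n → TGerm)
    (c : Fin p → WithBot ℝ) (d : Fin p → TGerm)
    (e : Fin n → WithBot ℝ) (f : Fin n → TGerm) (g : WithBot ℝ) (h : TGerm)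
    (hh : h ≠ TGerm.posInf)
    (hne : ¬ (g = ⊥ ∧ ∀ i, e i = ⊥)) :
    (∀ x : Fin n → WithBot ℝ,
        (∀ i, (TGerm.add (TGerm.gsum fun j => (toGerm (A i j)).mul (toGerm (x j)))
                  (toGerm (c i))).gle
                (TGerm.add (TGerm.gsum fun j => (B i j).mul (toGerm (x j))) (d i))) →
        (exG e g x).gle (TGerm.add (TGerm.gsum fun j => (f j).mul (toGerm (x j))) h))
    ↔ { x : Fin n → WithBot ℝ |
          (∀ i, (TGerm.add (TGerm.gsum fun j => (toGerm (A i j)).mul (toGerm (x j)))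
                    (toGerm (c i))).gle
                  (TGerm.add (TGerm.gsum fun j => (B i j).mul (toGerm (x j))) (d i))) ∧
          (∀ i, fCon e g f x i) ∧ hCon e g h x ∧ gCon e g x } = ∅ := by
  rw [Set.eq_empty_iff_forall_notMem]
  constructor
  · intro H x hx
    obtain ⟨hP, hC⟩ := hx
    exact (key e f g h hh x).mpr hC (H x hP)
  · intro H x hP
    by_contra hng
    exact H x ⟨hP, (key e f g h hh x).mp hng⟩
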